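/- Fix a real number $\sigma$ with $0 < \sigma < 1$. Then the function $a \mapsto \zeta(\sigma, a)$ is strictly decreasing on $(0,1)$, and for every $a \in (0,1)$ its derivative with respect to $a$ equals $-\frac{1}{\Gamma(\sigma)} \int_0^{\infty} \frac{e^{(1-a)x}}{e^x - 1}\, x^{\sigma}\, dx < 0$. -/

import Mathlib

open HurwitzZeta Set Complex MeasureTheory Filter Topology Metric

noncomputable def Qc (a : ℝ) (n : ℕ) (s : ℂ) : ℂ :=
  (((n : ℝ) + 1 + a : ℝ) : ℂ) ^ (-s) -
    ((((n : ℝ) + 2 + a : ℝ) : ℂ) ^ (1 - s) - (((n : ℝ) + 1 + a : ℝ) : ℂ) ^ (1 - s)) / (1 - s)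

noncomputable def Fc (a : ℝ) (s : ℂ) : ℂ :=
  ((a : ℝ) : ℂ) ^ (-s) - ((1 + a : ℝ) : ℂ) ^ (1 - s) / (1 - s) + ∑' n, Qc a n s

noncomputable def qR (σ a : ℝ) (n : ℕ) : ℝ :=
  ((n : ℝ) + 1 + a) ^ (-σ) - (((n : ℝ) + 2 + a) ^ (1 - σ) - ((n : ℝ) + 1 + a) ^ (1 - σ)) / (1 - σ)

noncomputable def fR (σ a : ℝ) : ℝ :=
  a ^ (-σ) - (1 + a) ^ (1 - σ) / (1 - σ) + ∑' n, qR σ a n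

lemma rpow_neg_sub_le {x y c : ℝ} (hx : 0 < x) (hxy : x ≤ y) (hc : 0 < c) :
    x ^ (-c) - y ^ (-c) ≤ c * x ^ (-c - 1) * (y - x) := by
  rcases eq_or_lt_of_le hxy with rfl | hlt
  · simp
  · have hcont : ContinuousOn (fun t : ℝ => t ^ (-c)) (Set.Icc x y) := by
      apply ContinuousOn.rpow_const continuousOn_id
      intro t ht
      exact Or.inl (ne_of_gt (lt_of_lt_of_le hx ht.1))
    have hderiv : ∀ t ∈ Set.Ioo x y,
        HasDerivAt (fun t : ℝ => t ^ (-c)) (-c * t ^ (-c - 1)) t := by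
      intro t ht
      exact Real.hasDerivAt_rpow_const (Or.inl (ne_of_gt (hx.trans ht.1)))
    obtain ⟨t, ht, hslope⟩ := exists_hasDerivAt_eq_slope (fun t : ℝ => t ^ (-c))
      (fun t => -c * t ^ (-c - 1)) hlt hcont hderiv
    have hxpos : 0 < t := hx.trans ht.1
    have : x ^ (-c) - y ^ (-c) = c * t ^ (-c - 1) * (y - x) := by
      have hyx : y - x ≠ 0 := ne_of_gt (sub_pos.2 hlt)
      field_simp at hslope
      nlinarith [hslope]
    rw [this]
    have : t ^ (-c - 1) ≤ x ^ (-c - 1) := by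
      apply Real.rpow_le_rpow_of_nonpos hx ht.1.le (by linarith)
    have hyx : (0:ℝ) ≤ y - x := by linarith
    exact mul_le_mul_of_nonneg_right (mul_le_mul_of_nonneg_left this hc.le) hyx

lemma hasDerivAt_ofReal_cpow_neg {x : ℝ} (hx : 0 < x) {s : ℂ} (hs : s ≠ 0) :
    HasDerivAt (fun y : ℝ => (y : ℂ) ^ (-s)) (-s * (x : ℂ) ^ (-s - 1)) x := by
  have h1 : (-s - 1 : ℂ) ≠ -1 := by
    intro h; apply hs; have : -s = 0 := by linear_combination h
    linear_combination -this
  have := (hasDerivAt_ofReal_cpow_const' (ne_of_gt hx) h1).const_mul (-s - 1 + 1)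
  have h2 : (-s - 1 + 1 : ℂ) ≠ 0 := by
    intro h; exact hs (by linear_combination -h)
  exact hasDerivAt_ofReal_cpow_const (ne_of_gt hx) (neg_ne_zero.2 hs)

lemma hasDerivAt_ofReal_cpow_one_sub {x : ℝ} (hx : 0 < x) {s : ℂ} (hs : s ≠ 1) :
    HasDerivAt (fun y : ℝ => (y : ℂ) ^ (1 - s) / (1 - s)) ((x : ℂ) ^ (-s)) x := by
  have h1 : (-s : ℂ) ≠ -1 := by
    intro h; exact hs (by linear_combination -h)
  have := hasDerivAt_ofReal_cpow_const' (ne_of_gt hx) h1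
  convert this using 2 with y <;> ring_nf

lemma summable_aux {δ : ℝ} (hδ : 0 < δ) (c : ℝ) :
    Summable (fun n : ℕ => c * ((n : ℝ) + 1) ^ (-δ - 1)) := by
  apply Summable.mul_left
  have : Summable (fun n : ℕ => ((n : ℝ)) ^ (-δ - 1)) := by
    rw [Real.summable_nat_rpow]
    linarith
  have h2 := (summable_nat_add_iff 1).2 this
  apply h2.congr
  intro n
  push_cast
  ring_nf

lemma norm_Qc_le {a : ℝ} (ha : 0 < a) (n : ℕ) {s : ℂ} {δ R : ℝ} (hδ : 0 < δ)
    (hδs : δ ≤ s.re) (hsR : ‖s‖ ≤ R) (hs1 : s ≠ 1) :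
    ‖Qc a n s‖ ≤ R * ((n : ℝ) + 1) ^ (-δ - 1) := by
  set b : ℝ := (n : ℝ) + 1 + a with hb
  have hnn : (0:ℝ) ≤ (n:ℝ) := Nat.cast_nonneg n
  have hb1 : (1 : ℝ) ≤ b := by rw [hb]; linarith
  have hbn : (n : ℝ) + 1 ≤ b := by rw [hb]; linarith
  have hn1 : (1:ℝ) ≤ (n : ℝ) + 1 := by linarith
  have hs0 : s ≠ 0 := by
    intro h; rw [h] at hδs; simp at hδs; linarith
  set C : ℝ := R * ((n : ℝ) + 1) ^ (-δ - 1) with hC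
  set ψ : ℝ → ℂ := fun t => ((t + b : ℝ) : ℂ) ^ (-s) with hψ
  set h : ℝ → ℂ := fun t => ((t + b : ℝ) : ℂ) ^ (1 - s) / (1 - s) with hh
  have hpos : ∀ t ∈ Icc (0:ℝ) 1, (0:ℝ) < t + b := fun t ht => by
    have := ht.1; linarith
  have hψd : ∀ t ∈ Icc (0:ℝ) 1,
      HasDerivAt ψ (-s * ((t + b : ℝ) : ℂ) ^ (-s - 1)) t := by
    intro t ht
    have h1 := hasDerivAt_ofReal_cpow_neg (hpos t ht) hs0
    have h2 : HasDerivAt (fun u : ℝ => u + b) 1 t := (hasDerivAt_id t).add_const b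
    have h3 := h1.scomp t h2
    simp only [one_smul] at h3
    exact h3
  have hψbound : ∀ t ∈ Icc (0:ℝ) 1, ‖-s * ((t + b : ℝ) : ℂ) ^ (-s - 1)‖ ≤ C := by
    intro t ht
    rw [norm_mul, norm_neg]
    have hnorm : ‖((t + b : ℝ) : ℂ) ^ (-s - 1)‖ = (t + b) ^ ((-s - 1).re) := by
      rw [Complex.norm_cpow_eq_rpow_re_of_pos (hpos t ht)]
    rw [hnorm]
    have hre : (-s - 1).re = -s.re - 1 := by simp
    rw [hre]
    have e1 : (t + b) ^ (-s.re - 1) ≤ ((n:ℝ) + 1) ^ (-s.re - 1) := by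
      apply Real.rpow_le_rpow_of_nonpos (by positivity) (by linarith [ht.1]) (by linarith)
    have e2 : ((n:ℝ) + 1) ^ (-s.re - 1) ≤ ((n:ℝ) + 1) ^ (-δ - 1) :=
      Real.rpow_le_rpow_of_exponent_le hn1 (by linarith)
    have e3 : (0:ℝ) ≤ ((n:ℝ)+1) ^ (-δ-1) := by positivity
    rw [hC]
    apply mul_le_mul hsR (e1.trans e2) (Real.rpow_nonneg (hpos t ht).le _) (le_trans (norm_nonneg s) hsR)
  -- step 1 : ‖ψ t - ψ 0‖ ≤ C
  have step1 : ∀ t ∈ Icc (0:ℝ) 1, ‖ψ t - ψ 0‖ ≤ C := by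
    intro t ht
    have := (convex_Icc (0:ℝ) 1).norm_image_sub_le_of_norm_hasDerivWithin_le
      (f := ψ) (f' := fun t => -s * ((t + b : ℝ) : ℂ) ^ (-s - 1)) (C := C)
      (fun u hu => (hψd u hu).hasDerivWithinAt) hψbound
      (left_mem_Icc.2 zero_le_one) ht
    calc ‖ψ t - ψ 0‖ ≤ C * ‖t - 0‖ := this
      _ ≤ C * 1 := by
          apply mul_le_mul_of_nonneg_left _ (le_trans (norm_nonneg _) (hψbound 0 (left_mem_Icc.2 zero_le_one)))
          rw [sub_zero, Real.norm_eq_abs, _root_.abs_of_nonneg ht.1]; exact ht.2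
      _ = C := mul_one C
  -- step 2 : φ
  set φ : ℝ → ℂ := fun t => h t - (t : ℂ) * ψ 0 with hφ
  have hφd : ∀ t ∈ Icc (0:ℝ) 1, HasDerivAt φ (ψ t - ψ 0) t := by
    intro t ht
    have h1 := hasDerivAt_ofReal_cpow_one_sub (hpos t ht) hs1
    have h2 : HasDerivAt (fun u : ℝ => u + b) 1 t := (hasDerivAt_id t).add_const b
    have h3 : HasDerivAt h (ψ t) t := by
      have h3' := h1.scomp t h2
      simp only [one_smul] at h3'
      exact h3'
    have h4 : HasDerivAt (fun u : ℝ => (u : ℂ) * ψ 0) (ψ 0) t := by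
      simpa using ((hasDerivAt_id t).ofReal_comp).mul_const (ψ 0)
    exact h3.sub h4
  have step2 : ‖φ 1 - φ 0‖ ≤ C := by
    have := (convex_Icc (0:ℝ) 1).norm_image_sub_le_of_norm_hasDerivWithin_le
      (f := φ) (f' := fun t => ψ t - ψ 0) (C := C)
      (fun u hu => (hφd u hu).hasDerivWithinAt) step1
      (left_mem_Icc.2 zero_le_one) (right_mem_Icc.2 zero_le_one)
    simpa using this
  -- step 3 : identify
  have key : Qc a n s = -(φ 1 - φ 0) := by
    simp only [hφ, hh, hψ, Qc]
    have e1 : ((1:ℝ) + b) = (n : ℝ) + 2 + a := by rw [hb]; ring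
    have e2 : ((0:ℝ) + b) = (n : ℝ) + 1 + a := by rw [hb]; ring
    rw [e1, e2]
    push_cast
    ring
  rw [key, norm_neg]
  exact step2

lemma summable_Qc {a : ℝ} (ha : 0 < a) {s : ℂ} {δ : ℝ} (hδ : 0 < δ) (hδs : δ ≤ s.re)
    (hs1 : s ≠ 1) : Summable (fun n => Qc a n s) :=
  Summable.of_norm_bounded (summable_aux hδ ‖s‖)
    (fun n => norm_Qc_le ha n hδ hδs le_rfl hs1)

lemma Fc_eq_of_one_lt_re {a : ℝ} (ha : a ∈ Ioo (0:ℝ) 1) {s : ℂ} (hs : 1 < s.re) :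
    hurwitzZeta (a : UnitAddCircle) s = Fc a s := by
  have hs1 : s ≠ 1 := by intro h; rw [h] at hs; simp at hs
  have hs1' : (1 : ℂ) - s ≠ 0 := by
    intro h; exact hs1 (by linear_combination -h)
  set f : ℕ → ℂ := fun n => (((n : ℝ) + a : ℝ) : ℂ) ^ (-s) with hf
  have H : HasSum f (hurwitzZeta (a : UnitAddCircle) s) := by
    have := hasSum_hurwitzZeta_of_one_lt_re ⟨ha.1.le, ha.2.le⟩ hs
    apply this.congr_fun
    intro n
    rw [hf]
    push_cast
    rw [cpow_neg, one_div]
  have Hsh : HasSum (fun n => f (n + 1))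
      (hurwitzZeta (a : UnitAddCircle) s - ((a:ℝ) : ℂ) ^ (-s)) := by
    have := (hasSum_nat_add_iff' (f := f) 1).2 H
    simpa [hf] using this
  have hfs : ∀ n : ℕ, f (n + 1) = (((n : ℝ) + 1 + a : ℝ) : ℂ) ^ (-s) := by
    intro n; rw [hf]; push_cast; ring_nf
  set T : ℕ → ℂ := fun n => (((n : ℝ) + 1 + a : ℝ) : ℂ) ^ (1 - s) / (1 - s) with hT
  have hQT : ∀ n : ℕ, Qc a n s = f (n + 1) - (T (n + 1) - T n) := by
    intro n
    rw [hfs n, Qc, hT]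
    have : ((n : ℕ) + 1 : ℕ) = n + 1 := rfl
    push_cast
    ring_nf
  have hTel : HasSum (fun n => T (n + 1) - T n) (-T 0) := by
    have hsum : Summable (fun n => T (n + 1) - T n) := by
      have h1 : Summable (fun n => f (n + 1)) := Hsh.summable
      have h2 : Summable (fun n => Qc a n s) :=
        summable_Qc ha.1 zero_lt_one (le_of_lt hs) hs1
      have := h1.sub h2
      apply this.congr
      intro n; rw [hQT n]; ring
    have hten : Tendsto (fun N => ∑ i ∈ Finset.range N, (T (i + 1) - T i)) atTop
        (𝓝 (-T 0)) := by
      have heq : ∀ N, ∑ i ∈ Finset.range N, (T (i + 1) - T i) = T N - T 0 :=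
        fun N => Finset.sum_range_sub T N
      rw [show (𝓝 (-T 0)) = 𝓝 ((0 : ℂ) - T 0) by rw [zero_sub]]
      simp only [heq]
      apply Tendsto.sub_const
      -- T N → 0
      apply squeeze_zero_norm (a := fun N : ℕ => ((N : ℝ) + 1 + a) ^ (1 - s.re) * ‖(1 - s)⁻¹‖)
      · intro n
        have ha0 := ha.1
        have hpos : (0:ℝ) < (n : ℝ) + 1 + a := by positivity
        show ‖(((n : ℝ) + 1 + a : ℝ) : ℂ) ^ (1 - s) / (1 - s)‖ ≤ _
        rw [div_eq_mul_inv, norm_mul,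
          Complex.norm_cpow_eq_rpow_re_of_pos hpos]
        simp
      · rw [show (0:ℝ) = 0 * ‖(1-s)⁻¹‖ by ring]
        apply Tendsto.mul_const
        have hexp : 1 - s.re = -(s.re - 1) := by ring
        rw [hexp]
        have hbase : Tendsto (fun N : ℕ => (N : ℝ) + 1 + a) atTop atTop :=
          tendsto_atTop_add_const_right _ _ (tendsto_atTop_add_const_right _ _
            tendsto_natCast_atTop_atTop)
        exact (tendsto_rpow_neg_atTop (by linarith)).comp hbase
    have := hsum.hasSum
    rwa [tendsto_nhds_unique this.tendsto_sum_nat hten] at this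
  have HQ : HasSum (fun n => Qc a n s)
      (hurwitzZeta (a : UnitAddCircle) s - ((a:ℝ) : ℂ) ^ (-s) - (-T 0)) := by
    have := Hsh.sub hTel
    apply this.congr_fun
    intro n; rw [hQT n]
  have hT0 : T 0 = ((1 + a : ℝ) : ℂ) ^ (1 - s) / (1 - s) := by rw [hT]; norm_num
  rw [Fc, HQ.tsum_eq, hT0]
  ring

lemma Fc_eq_of_pos_re {a : ℝ} (ha : a ∈ Ioo (0:ℝ) 1) {σ : ℝ} (hσ : 0 < σ) (hσ' : σ < 1) :
    hurwitzZeta (a : UnitAddCircle) (σ : ℂ) = Fc a (σ : ℂ) := by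
  set U : Set ℂ := (ball (0:ℂ) 6 ∩ {s | σ/2 < s.re}) \ {1} with hU
  have hne1 : ∀ s ∈ U, s ≠ 1 := fun s hs => by
    intro h; exact hs.2 (by rw [h]; exact rfl)
  have hUopen : IsOpen U :=
    (isOpen_ball.inter (isOpen_lt continuous_const continuous_re)).sdiff isClosed_singleton
  -- preconnectedness
  have hUconn : IsPreconnected U := by
    set A1 : Set ℂ := ball (0:ℂ) 6 ∩ {s | σ/2 < s.re} ∩ {s | 0 < s.im} with hA1
    set A2 : Set ℂ := ball (0:ℂ) 6 ∩ {s | σ/2 < s.re} ∩ {s | s.im < 0} with hA2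
    set A3 : Set ℂ := ball (0:ℂ) 6 ∩ {s | σ/2 < s.re} ∩ {s | s.re < 1} with hA3
    set A4 : Set ℂ := ball (0:ℂ) 6 ∩ {s | 1 < s.re} with hA4
    have c1 : IsPreconnected A1 :=
      (((convex_ball _ _).inter (convex_halfSpace_re_gt _)).inter
        (convex_halfSpace_im_gt _)).isPreconnected
    have c2 : IsPreconnected A2 :=
      (((convex_ball _ _).inter (convex_halfSpace_re_gt _)).inter
        (convex_halfSpace_im_lt _)).isPreconnected
    have c3 : IsPreconnected A3 :=
      (((convex_ball _ _).inter (convex_halfSpace_re_gt _)).inter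
        (convex_halfSpace_re_lt _)).isPreconnected
    have c4 : IsPreconnected A4 :=
      ((convex_ball _ _).inter (convex_halfSpace_re_gt _)).isPreconnected
    have hre : ∀ x y : ℝ, ((x:ℂ) + (y:ℂ)*I).re = x := by intro x y; simp
    have him : ∀ x y : ℝ, ((x:ℂ) + (y:ℂ)*I).im = y := by intro x y; simp
    have hball : ∀ x y : ℝ, 0 ≤ x → x ≤ 2 → -1 ≤ y → y ≤ 1 →
        ((x:ℂ) + (y:ℂ)*I) ∈ ball (0:ℂ) 6 := by
      intro x y hx hx2 hy1 hy2
      rw [mem_ball_zero_iff]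
      have hy : |y| ≤ 1 := abs_le.2 ⟨hy1, hy2⟩
      calc ‖(x:ℂ) + (y:ℂ)*I‖ ≤ |x| + |y| := by
            simpa [hre, him] using Complex.norm_le_abs_re_add_abs_im ((x:ℂ)+(y:ℂ)*I)
        _ < 6 := by rw [_root_.abs_of_nonneg hx]; linarith
    have hz13 : ((0.6:ℝ):ℂ) + ((0.1:ℝ):ℂ)*I ∈ A1 ∩ A3 := by
      simp only [hA1, hA3, mem_inter_iff, mem_setOf_eq, hre, him]
      refine ⟨⟨⟨hball _ _ (by norm_num) (by norm_num) (by norm_num) (by norm_num), by linarith⟩, by norm_num⟩,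
        ⟨⟨hball _ _ (by norm_num) (by norm_num) (by norm_num) (by norm_num), by linarith⟩, by norm_num⟩⟩
    have hz14 : ((2:ℝ):ℂ) + ((0.1:ℝ):ℂ)*I ∈ A1 ∩ A4 := by
      simp only [hA1, hA4, mem_inter_iff, mem_setOf_eq, hre, him]
      refine ⟨⟨⟨hball _ _ (by norm_num) (by norm_num) (by norm_num) (by norm_num), by linarith⟩, by norm_num⟩,
        ⟨hball _ _ (by norm_num) (by norm_num) (by norm_num) (by norm_num), by norm_num⟩⟩
    have hz23 : ((0.6:ℝ):ℂ) + ((-0.1:ℝ):ℂ)*I ∈ A2 ∩ A3 := by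
      simp only [hA2, hA3, mem_inter_iff, mem_setOf_eq, hre, him]
      refine ⟨⟨⟨hball _ _ (by norm_num) (by norm_num) (by norm_num) (by norm_num), by linarith⟩, by norm_num⟩,
        ⟨⟨hball _ _ (by norm_num) (by norm_num) (by norm_num) (by norm_num), by linarith⟩, by norm_num⟩⟩
    have u13 : IsPreconnected (A1 ∪ A3) := c1.union _ hz13.1 hz13.2 c3
    have u134 : IsPreconnected ((A1 ∪ A3) ∪ A4) :=
      u13.union _ (Or.inl hz14.1) hz14.2 c4
    have u1342 : IsPreconnected (((A1 ∪ A3) ∪ A4) ∪ A2) :=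
      u134.union _ (Or.inl (Or.inr hz23.2)) hz23.1 c2
    have hUeq : U = ((A1 ∪ A3) ∪ A4) ∪ A2 := by
      ext s
      simp only [hU, hA1, hA2, hA3, hA4, mem_diff, mem_inter_iff, mem_union,
        mem_setOf_eq, mem_singleton_iff]
      constructor
      · rintro ⟨⟨hb, hr⟩, h1⟩
        rcases lt_trichotomy s.im 0 with him0 | him0 | him0
        · right; exact ⟨⟨hb, hr⟩, him0⟩
        · rcases lt_trichotomy s.re 1 with hre0 | hre0 | hre0
          · exact Or.inl (Or.inl (Or.inr ⟨⟨hb, hr⟩, hre0⟩))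
          · exact absurd (Complex.ext (by simpa using hre0) (by simpa using him0)) h1
          · exact Or.inl (Or.inr ⟨hb, hre0⟩)
        · exact Or.inl (Or.inl (Or.inl ⟨⟨hb, hr⟩, him0⟩))
      · have him1 : (1:ℂ).im = 0 := rfl
        have hre1 : (1:ℂ).re = 1 := rfl
        rintro (((⟨⟨hb, hr⟩, h⟩ | ⟨⟨hb, hr⟩, h⟩) | ⟨hb, h⟩) | ⟨⟨hb, hr⟩, h⟩)
        · exact ⟨⟨hb, hr⟩, fun hs => by rw [hs, him1] at h; exact lt_irrefl _ h⟩
        · exact ⟨⟨hb, hr⟩, fun hs => by rw [hs, hre1] at h; exact lt_irrefl _ h⟩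
        · exact ⟨⟨hb, by linarith⟩, fun hs => by rw [hs, hre1] at h; exact lt_irrefl _ h⟩
        · exact ⟨⟨hb, hr⟩, fun hs => by rw [hs, him1] at h; exact lt_irrefl _ h⟩
    rw [hUeq]
    exact u1342
  -- differentiability of hurwitzZeta on U
  have hζdiff : DifferentiableOn ℂ (fun s => hurwitzZeta (a : UnitAddCircle) s) U :=
    fun s hs => (differentiableAt_hurwitzZeta (a : UnitAddCircle)
      (hne1 s hs)).differentiableWithinAt
  -- differentiability of Fc on U
  have hbase_ne : ∀ b : ℝ, 0 < b → ((b : ℝ) : ℂ) ≠ 0 := by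
    intro b hb
    simpa using ne_of_gt hb
  have ha0 : 0 < a := ha.1
  have hFdiff : DifferentiableOn ℂ (Fc a) U := by
    have h1 : DifferentiableOn ℂ (fun s : ℂ => ((a:ℝ):ℂ) ^ (-s)) U :=
      (differentiable_neg.const_cpow (Or.inl (hbase_ne a ha.1))).differentiableOn
    have h2 : DifferentiableOn ℂ (fun s : ℂ => ((1 + a : ℝ):ℂ) ^ (1 - s) / (1 - s)) U := by
      apply DifferentiableOn.div
      · exact ((differentiable_const (1:ℂ)).sub differentiable_id).const_cpow
          (Or.inl (hbase_ne _ (by linarith [ha.1]))) |>.differentiableOn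
      · exact ((differentiable_const (1:ℂ)).sub differentiable_id).differentiableOn
      · intro s hs
        exact sub_ne_zero.2 (Ne.symm (hne1 s hs))
    have h3 : DifferentiableOn ℂ (fun s : ℂ => ∑' n, Qc a n s) U := by
      apply differentiableOn_tsum_of_summable_norm
        (summable_aux (half_pos hσ) 6) _ hUopen
      · intro n s hs
        exact norm_Qc_le ha.1 n (half_pos hσ) (le_of_lt hs.1.2)
          (le_of_lt (mem_ball_zero_iff.1 hs.1.1)) (hne1 s hs)
      · intro n
        apply DifferentiableOn.sub
        · exact (differentiable_neg.const_cpow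
            (Or.inl (hbase_ne _ (by positivity)))).differentiableOn
        · apply DifferentiableOn.div
          · apply DifferentiableOn.sub <;>
              exact (((differentiable_const (1:ℂ)).sub differentiable_id).const_cpow
                (Or.inl (hbase_ne _ (by positivity)))).differentiableOn
          · exact ((differentiable_const (1:ℂ)).sub differentiable_id).differentiableOn
          · intro s hs
            exact sub_ne_zero.2 (Ne.symm (hne1 s hs))
    exact (h1.sub h2).add h3
  -- identity theorem
  have hana1 : AnalyticOnNhd ℂ (fun s => hurwitzZeta (a : UnitAddCircle) s) U :=
    hζdiff.analyticOnNhd hUopen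
  have hana2 : AnalyticOnNhd ℂ (Fc a) U := hFdiff.analyticOnNhd hUopen
  have h2U : (2 : ℂ) ∈ U := by
    refine ⟨⟨?_, ?_⟩, ?_⟩
    · rw [mem_ball_zero_iff]
      simp only [Complex.norm_ofNat]
      norm_num
    · simp only [mem_setOf_eq]
      rw [show ((2:ℂ)).re = 2 by norm_num]
      linarith
    · simp only [mem_singleton_iff]
      norm_num
  have hfg : (fun s => hurwitzZeta (a : UnitAddCircle) s) =ᶠ[nhds (2:ℂ)] Fc a := by
    have hopen : IsOpen {s : ℂ | 1 < s.re} := isOpen_lt continuous_const continuous_re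
    have h2mem : (2:ℂ) ∈ {s : ℂ | 1 < s.re} := by
      rw [mem_setOf_eq, show ((2:ℂ)).re = 2 by norm_num]
      norm_num
    filter_upwards [hopen.mem_nhds h2mem] with s hs
    exact Fc_eq_of_one_lt_re ha hs
  have heq := hana1.eqOn_of_preconnected_of_eventuallyEq hana2 hUconn h2U hfg
  apply heq
  refine ⟨⟨?_, ?_⟩, ?_⟩
  · rw [mem_ball_zero_iff, Complex.norm_real, Real.norm_eq_abs, abs_of_pos hσ]
    linarith
  · simp only [mem_setOf_eq, Complex.ofReal_re]
    linarith
  · simp only [mem_singleton_iff]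
    intro h
    have : σ = 1 := by exact_mod_cast h
    linarith

lemma Qc_ofReal {a : ℝ} (ha : 0 < a) (σ : ℝ) (n : ℕ) :
    Qc a n (σ : ℂ) = ((qR σ a n : ℝ) : ℂ) := by
  have ha0 : 0 < a := ha
  have p1 : (0:ℝ) ≤ (n : ℝ) + 1 + a := by positivity
  have p2 : (0:ℝ) ≤ (n : ℝ) + 2 + a := by positivity
  rw [Qc, qR]
  simp only [Complex.ofReal_sub, Complex.ofReal_div, Complex.ofReal_cpow p1,
    Complex.ofReal_cpow p2]
  push_cast
  ring

lemma Fc_ofReal {a : ℝ} (ha : 0 < a) {σ : ℝ} (hσ : 0 < σ) (hσ' : σ < 1) :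
    Fc a (σ : ℂ) = ((fR σ a : ℝ) : ℂ) := by
  have p1 : (0:ℝ) ≤ a := ha.le
  have p2 : (0:ℝ) ≤ 1 + a := by positivity
  rw [Fc, fR]
  simp only [Complex.ofReal_add, Complex.ofReal_sub, Complex.ofReal_div,
    Complex.ofReal_cpow p1, Complex.ofReal_cpow p2, Complex.ofReal_tsum]
  congr 1
  · push_cast; ring
  · exact tsum_congr fun n => Qc_ofReal ha σ n

lemma summable_shift {σ : ℝ} (hσ : 0 < σ) {a : ℝ} (ha : 0 < a) :
    Summable (fun n : ℕ => ((n : ℝ) + a) ^ (-σ - 1)) := by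
  rw [← summable_nat_add_iff 1]
  have h : Summable (fun n : ℕ => ((n : ℝ) + 1) ^ (-σ - 1)) := by
    have := (Real.summable_nat_rpow (p := -σ - 1)).2 (by linarith)
    have h2 := (summable_nat_add_iff 1).2 this
    apply h2.congr
    intro n; push_cast; ring_nf
  apply Summable.of_nonneg_of_le (fun n => Real.rpow_nonneg (by positivity) _)
    (fun n => ?_) h
  have p0 : (0:ℝ) < (n:ℝ) + 1 := by positivity
  apply Real.rpow_le_rpow_of_nonpos p0 ?_ (by linarith)
  push_cast; linarith

lemma integral_eval {σ : ℝ} (hσ : 0 < σ) (hσ'' : σ < 1) {a : ℝ} (ha : a ∈ Ioo (0:ℝ) 1) :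
    ∫ x in Set.Ioi (0 : ℝ), Real.exp ((1 - a) * x) / (Real.exp x - 1) * x ^ σ
      = Real.Gamma (σ + 1) * ∑' n : ℕ, ((n : ℝ) + a) ^ (-σ - 1) := by
  have ha0 := ha.1
  set g : ℕ → ℝ → ℝ := fun n x => Real.exp (-(((n:ℝ) + a) * x)) * x ^ σ with hg
  have hna : ∀ n : ℕ, (0:ℝ) < (n:ℝ) + a := fun n => by positivity
  -- integrability
  have hint : ∀ n : ℕ, IntegrableOn (g n) (Ioi 0) := by
    intro n
    have h := integrableOn_rpow_mul_exp_neg_mul_rpow (p := 1) (s := σ) (b := (n:ℝ) + a)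
      (by linarith) zero_lt_one (hna n)
    apply h.congr_fun ?_ measurableSet_Ioi
    intro x hx
    rw [hg]
    simp only [Real.rpow_one]
    ring
  -- integral values
  have hval : ∀ n : ℕ, ∫ x in Ioi (0:ℝ), g n x = Real.Gamma (σ + 1) * ((n:ℝ) + a) ^ (-σ - 1) := by
    intro n
    have h := Real.integral_rpow_mul_exp_neg_mul_Ioi (a := σ + 1) (r := (n:ℝ) + a)
      (by linarith) (hna n)
    have e1 : σ + 1 - 1 = σ := by ring
    rw [e1] at h
    have e2 : ∫ x in Ioi (0:ℝ), g n x = ∫ t in Ioi (0:ℝ), t ^ σ * Real.exp (-(((n:ℝ)+a) * t)) := by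
      apply setIntegral_congr_fun measurableSet_Ioi
      intro x hx
      rw [hg]; ring
    rw [e2, h]
    rw [one_div, Real.inv_rpow (hna n).le, ← Real.rpow_neg (hna n).le,
      show -(σ+1) = -σ-1 by ring]
    ring
  -- summability of integrals of norms
  have hnorm : ∀ n : ℕ, ∫ x in Ioi (0:ℝ), ‖g n x‖ = Real.Gamma (σ + 1) * ((n:ℝ) + a) ^ (-σ - 1) := by
    intro n
    rw [← hval n]
    apply setIntegral_congr_fun measurableSet_Ioi
    intro x hx
    have hnn : 0 ≤ g n x := by
      have hxσ : (0:ℝ) ≤ x ^ σ := Real.rpow_nonneg (le_of_lt hx) σ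
      rw [hg]
      exact mul_nonneg (Real.exp_nonneg _) hxσ
    simp only [Real.norm_eq_abs]
    exact _root_.abs_of_nonneg hnn
  have hsum : Summable (fun n : ℕ => ∫ x in Ioi (0:ℝ), ‖g n x‖) := by
    simp only [hnorm]
    exact (summable_shift hσ ha0).mul_left _
  -- swap integral and sum
  have hswap := MeasureTheory.integral_tsum_of_summable_integral_norm hint hsum
  -- pointwise identity
  have hpt : ∀ x ∈ Ioi (0:ℝ),
      ∑' n : ℕ, g n x = Real.exp ((1 - a) * x) / (Real.exp x - 1) * x ^ σ := by
    intro x hx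
    have hx0 : (0:ℝ) < x := hx
    have hlt : Real.exp (-x) < 1 := by
      rw [Real.exp_lt_one_iff]; linarith
    have hgeo : HasSum (fun n : ℕ => Real.exp (-x) ^ n * (Real.exp (-(a * x)) * x ^ σ))
        ((1 - Real.exp (-x))⁻¹ * (Real.exp (-(a * x)) * x ^ σ)) :=
      (hasSum_geometric_of_lt_one (Real.exp_nonneg _) hlt).mul_right _
    have hcong : ∀ n : ℕ, g n x = Real.exp (-x) ^ n * (Real.exp (-(a * x)) * x ^ σ) := by
      intro n
      have e2 : -(((n:ℝ) + a) * x) = (n:ℝ) * -x + -(a * x) := by ring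
      show Real.exp (-(((n:ℝ) + a) * x)) * x ^ σ = _
      rw [e2, Real.exp_add, Real.exp_nat_mul]
      ring
    have hsum' : HasSum (fun n => g n x)
        ((1 - Real.exp (-x))⁻¹ * (Real.exp (-(a * x)) * x ^ σ)) := by
      apply hgeo.congr_fun
      intro n; rw [hcong n]
    rw [hsum'.tsum_eq]
    have h1 : Real.exp x ≠ 0 := (Real.exp_pos x).ne'
    have h2 : Real.exp x - 1 ≠ 0 := by
      have : (1:ℝ) < Real.exp x := by
        rw [← Real.exp_zero]; exact Real.exp_lt_exp.2 hx0
      linarith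
    have h3 : 1 - Real.exp (-x) ≠ 0 := by linarith
    field_simp
    rw [show x * (1 - a) = -(x*a) + x by ring, Real.exp_add, Real.exp_neg x]
    field_simp
  calc ∫ x in Ioi (0:ℝ), Real.exp ((1 - a) * x) / (Real.exp x - 1) * x ^ σ
      = ∫ x in Ioi (0:ℝ), ∑' n : ℕ, g n x := by
        apply setIntegral_congr_fun measurableSet_Ioi
        intro x hx
        exact (hpt x hx).symm
    _ = ∑' n : ℕ, ∫ x in Ioi (0:ℝ), g n x := hswap.symm
    _ = Real.Gamma (σ + 1) * ∑' n : ℕ, ((n : ℝ) + a) ^ (-σ - 1) := by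
        simp only [hval]
        rw [tsum_mul_left]

lemma summable_qR {σ : ℝ} (hσ : 0 < σ) (hσ' : σ < 1) {a : ℝ} (ha : a ∈ Ioo (0:ℝ) 1) :
    Summable (fun n => qR σ a n) := by
  apply Summable.of_norm_bounded (summable_aux hσ σ)
  intro n
  calc ‖qR σ a n‖ = ‖Qc a n (σ : ℂ)‖ := by
        rw [Qc_ofReal ha.1 σ n, Complex.norm_real]
    _ ≤ σ * ((n : ℝ) + 1) ^ (-σ - 1) := by
        apply norm_Qc_le ha.1 n hσ (le_of_eq (Complex.ofReal_re σ).symm)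
          (le_of_eq (by rw [Complex.norm_real, Real.norm_eq_abs, abs_of_pos hσ]))
        exact_mod_cast ne_of_lt hσ'

lemma hasDerivAt_rpow_shift {c p : ℝ} {y : ℝ} (h : 0 < c + y) :
    HasDerivAt (fun x : ℝ => (c + x) ^ p) (p * (c + y) ^ (p - 1)) y := by
  have h1 : HasDerivAt (fun x : ℝ => c + x) 1 y := (hasDerivAt_id y).const_add c
  have h2 := Real.hasDerivAt_rpow_const (x := c + y) (p := p) (Or.inl (ne_of_gt h))
  simpa [Function.comp_def] using h2.comp y h1

lemma hasDerivAt_qR {σ : ℝ} (hσ : 0 < σ) (hσ' : σ < 1) (n : ℕ) {y : ℝ}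
    (hy : y ∈ Ioo (0:ℝ) 1) :
    HasDerivAt (fun x => qR σ x n)
      (-σ * ((n : ℝ) + 1 + y) ^ (-σ - 1) +
        (((n : ℝ) + 1 + y) ^ (-σ) - ((n : ℝ) + 2 + y) ^ (-σ))) y := by
  have hy0 := hy.1
  have p1 : (0:ℝ) < (n : ℝ) + 1 + y := by positivity
  have p2 : (0:ℝ) < (n : ℝ) + 2 + y := by positivity
  have h1σ : (1:ℝ) - σ ≠ 0 := by intro h; apply absurd hσ'; linarith
  have d1 := hasDerivAt_rpow_shift (c := (n:ℝ)+1) (p := -σ) p1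
  have d2 := hasDerivAt_rpow_shift (c := (n:ℝ)+2) (p := 1-σ) p2
  have d3 := hasDerivAt_rpow_shift (c := (n:ℝ)+1) (p := 1-σ) p1
  have e2 : (1:ℝ) - σ - 1 = -σ := by ring
  rw [e2] at d2 d3
  have := d1.sub ((d2.sub d3).div_const (1-σ))
  exact this.congr_deriv (by rw [← mul_sub, mul_div_cancel_left₀ _ h1σ]; ring)

lemma norm_q'_le {σ : ℝ} (hσ : 0 < σ) (n : ℕ) {y : ℝ} (hy : y ∈ Ioo (0:ℝ) 1) :
    ‖-σ * ((n : ℝ) + 1 + y) ^ (-σ - 1) +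
        (((n : ℝ) + 1 + y) ^ (-σ) - ((n : ℝ) + 2 + y) ^ (-σ))‖ ≤
      2 * σ * ((n : ℝ) + 1) ^ (-σ - 1) := by
  have hy0 := hy.1
  have p0 : (0:ℝ) < (n : ℝ) + 1 := by positivity
  have p1 : (0:ℝ) < (n : ℝ) + 1 + y := by positivity
  have le1 : ((n : ℝ) + 1 + y) ^ (-σ - 1) ≤ ((n : ℝ) + 1) ^ (-σ - 1) :=
    Real.rpow_le_rpow_of_nonpos p0 (by linarith) (by linarith)
  have s1 : (0:ℝ) ≤ ((n : ℝ) + 1 + y) ^ (-σ) - ((n : ℝ) + 2 + y) ^ (-σ) := by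
    have : ((n : ℝ) + 2 + y) ^ (-σ) ≤ ((n : ℝ) + 1 + y) ^ (-σ) :=
      Real.rpow_le_rpow_of_nonpos p1 (by linarith) (by linarith)
    linarith
  have s2 : ((n : ℝ) + 1 + y) ^ (-σ) - ((n : ℝ) + 2 + y) ^ (-σ) ≤
      σ * ((n : ℝ) + 1) ^ (-σ - 1) := by
    have := rpow_neg_sub_le p1 (by linarith : (n:ℝ) + 1 + y ≤ (n:ℝ) + 2 + y) hσ
    have e : ((n:ℝ) + 2 + y) - ((n:ℝ) + 1 + y) = 1 := by ring
    rw [e, mul_one] at this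
    calc ((n : ℝ) + 1 + y) ^ (-σ) - ((n : ℝ) + 2 + y) ^ (-σ)
        ≤ σ * ((n : ℝ) + 1 + y) ^ (-σ - 1) := this
      _ ≤ σ * ((n : ℝ) + 1) ^ (-σ - 1) := by
          exact mul_le_mul_of_nonneg_left le1 hσ.le
  have pos1 : (0:ℝ) ≤ ((n : ℝ) + 1 + y) ^ (-σ - 1) := Real.rpow_nonneg p1.le _
  have pos2 : (0:ℝ) ≤ ((n : ℝ) + 1) ^ (-σ - 1) := Real.rpow_nonneg p0.le _
  rw [Real.norm_eq_abs, abs_le]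
  constructor
  · nlinarith
  · nlinarith

lemma hasDerivAt_fR {σ : ℝ} (hσ : 0 < σ) (hσ' : σ < 1) {a : ℝ} (ha : a ∈ Ioo (0:ℝ) 1) :
    HasDerivAt (fR σ) (-σ * ∑' n : ℕ, ((n : ℝ) + a) ^ (-σ - 1)) a := by
  have ha0 := ha.1
  have h1σ : (1:ℝ) - σ ≠ 0 := by intro h; apply absurd hσ'; linarith
  set q' : ℕ → ℝ → ℝ := fun n y => -σ * ((n : ℝ) + 1 + y) ^ (-σ - 1) +
      (((n : ℝ) + 1 + y) ^ (-σ) - ((n : ℝ) + 2 + y) ^ (-σ)) with hq'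
  -- derivative of the tsum
  have hts : HasDerivAt (fun y => ∑' n, qR σ y n) (∑' n, q' n a) a := by
    apply hasDerivAt_tsum_of_isPreconnected (summable_aux hσ (2*σ)) isOpen_Ioo
      (convex_Ioo (0:ℝ) 1).isPreconnected
      (fun n y hy => hasDerivAt_qR hσ hσ' n hy)
      (fun n y hy => norm_q'_le hσ n hy) ha (summable_qR hσ hσ' ha) ha
  -- sum of the derivatives
  have hW0 : ∀ n : ℕ, (0:ℝ) < (n : ℝ) + 1 + a := fun n => by positivity
  set W : ℕ → ℝ := fun n => ((n : ℝ) + 1 + a) ^ (-σ) with hW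
  have htel : HasSum (fun n : ℕ => W n - W (n + 1)) ((1 + a) ^ (-σ)) := by
    have hsum : Summable (fun n : ℕ => W n - W (n + 1)) := by
      apply Summable.of_nonneg_of_le _ _ (summable_aux hσ σ)
      · intro n
        have : W (n + 1) ≤ W n := by
          rw [hW]
          push_cast
          exact Real.rpow_le_rpow_of_nonpos (hW0 n) (by linarith) (by linarith)
        linarith
      · intro n
        rw [hW]
        have h2 := rpow_neg_sub_le (hW0 n)
          (by push_cast; linarith : (n:ℝ) + 1 + a ≤ ((n:ℕ)+1 : ℕ) + 1 + a) hσ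
        have e : (((n:ℕ)+1 : ℕ) : ℝ) + 1 + a - ((n:ℝ) + 1 + a) = 1 := by push_cast; ring
        rw [e, mul_one] at h2
        calc ((n:ℝ) + 1 + a) ^ (-σ) - (((n+1 : ℕ) : ℝ) + 1 + a) ^ (-σ)
            ≤ σ * ((n:ℝ) + 1 + a) ^ (-σ - 1) := h2
          _ ≤ σ * ((n:ℝ) + 1) ^ (-σ - 1) := by
              apply mul_le_mul_of_nonneg_left _ hσ.le
              exact Real.rpow_le_rpow_of_nonpos (by positivity) (by linarith) (by linarith)
    have hten : Tendsto (fun N => ∑ i ∈ Finset.range N, (W i - W (i + 1))) atTop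
        (𝓝 ((1 + a) ^ (-σ))) := by
      have heq : ∀ N, ∑ i ∈ Finset.range N, (W i - W (i + 1)) = W 0 - W N := by
        intro N
        have := Finset.sum_range_sub (fun i => W i) N
        calc ∑ i ∈ Finset.range N, (W i - W (i + 1))
            = -∑ i ∈ Finset.range N, (W (i + 1) - W i) := by
              rw [← Finset.sum_neg_distrib]; congr 1; ext i; ring
          _ = W 0 - W N := by rw [this]; ring
      simp only [heq]
      have hW0' : W 0 = (1 + a) ^ (-σ) := by rw [hW]; norm_num
      rw [show (𝓝 ((1+a) ^ (-σ))) = 𝓝 (W 0 - 0) by rw [hW0', sub_zero]]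
      apply Tendsto.const_sub
      -- W N → 0
      have hbase : Tendsto (fun N : ℕ => (N : ℝ) + 1 + a) atTop atTop :=
        tendsto_atTop_add_const_right _ _ (tendsto_atTop_add_const_right _ _
          tendsto_natCast_atTop_atTop)
      have := (tendsto_rpow_neg_atTop hσ).comp hbase
      exact this
    have := hsum.hasSum
    rwa [tendsto_nhds_unique this.tendsto_sum_nat hten] at this
  have hsum1 : Summable (fun n : ℕ => ((n : ℝ) + 1 + a) ^ (-σ - 1)) := by
    have h := summable_aux hσ 1
    apply Summable.of_nonneg_of_le (fun n => Real.rpow_nonneg (hW0 n).le _) (fun n => ?_) h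
    rw [one_mul]
    exact Real.rpow_le_rpow_of_nonpos (by positivity) (by linarith) (by linarith)
  have hpart1 : HasSum (fun n : ℕ => -σ * ((n : ℝ) + 1 + a) ^ (-σ - 1))
      (-σ * ∑' n : ℕ, ((n : ℝ) + 1 + a) ^ (-σ - 1)) := hsum1.hasSum.mul_left _
  have hq'sum : HasSum (fun n => q' n a)
      (-σ * ∑' n : ℕ, ((n : ℝ) + 1 + a) ^ (-σ - 1) + (1 + a) ^ (-σ)) := by
    have := hpart1.add htel
    apply this.congr_fun
    intro n
    rw [hq', hW]
    push_cast
    ring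
  rw [hq'sum.tsum_eq] at hts
  -- derivatives of the first two terms
  have d1 : HasDerivAt (fun x : ℝ => x ^ (-σ)) (-σ * a ^ (-σ - 1)) a := by
    have := Real.hasDerivAt_rpow_const (x := a) (p := -σ) (Or.inl (ne_of_gt ha0))
    convert this using 1
  have d2 : HasDerivAt (fun x : ℝ => (1 + x) ^ (1 - σ) / (1 - σ)) ((1 + a) ^ (-σ)) a := by
    have h := hasDerivAt_rpow_shift (c := (1:ℝ)) (p := 1 - σ) (by linarith : (0:ℝ) < 1 + a)
    have e2 : (1:ℝ) - σ - 1 = -σ := by ring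
    rw [e2] at h
    have := h.div_const (1 - σ)
    exact this.congr_deriv (mul_div_cancel_left₀ _ h1σ)
  have := (d1.sub d2).add hts
  have hsum0 : Summable (fun n : ℕ => ((n : ℝ) + a) ^ (-σ - 1)) := by
    rw [← summable_nat_add_iff 1]
    apply hsum1.congr
    intro n
    congr 1
    push_cast
    ring
  have hshift : ∑' n : ℕ, ((n : ℝ) + a) ^ (-σ - 1)
      = a ^ (-σ - 1) + ∑' n : ℕ, ((n : ℝ) + 1 + a) ^ (-σ - 1) := by
    rw [Summable.tsum_eq_zero_add hsum0]
    congr 1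
    · norm_num
    · apply tsum_congr
      intro n
      congr 1
      push_cast
      ring
  rw [hshift]
  exact this.congr_deriv (by ring)

/-- For fixed `σ ∈ (0,1)`, the function `a ↦ ζ(σ,a)` is strictly decreasing on `(0,1)`, and for
every `a ∈ (0,1)` its derivative with respect to `a` equals
`-(1/Γ(σ)) ∫₀^∞ e^{(1-a)x}/(e^x - 1) x^σ dx`, which is negative. -/
theorem hurwitzZeta_strictAntiOn_and_hasDerivAt (σ : ℝ) (hσ : 0 < σ) (hσ' : σ < 1) :
    StrictAntiOn (fun a : ℝ => (hurwitzZeta (a : UnitAddCircle) (σ : ℂ)).re)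
      (Set.Ioo (0 : ℝ) 1) ∧
    ∀ a ∈ Set.Ioo (0 : ℝ) 1,
      HasDerivAt (fun a : ℝ => (hurwitzZeta (a : UnitAddCircle) (σ : ℂ)).re)
        (-(1 / Real.Gamma σ) *
          ∫ x in Set.Ioi (0 : ℝ), Real.exp ((1 - a) * x) / (Real.exp x - 1) * x ^ σ) a ∧
      (-(1 / Real.Gamma σ) *
          ∫ x in Set.Ioi (0 : ℝ), Real.exp ((1 - a) * x) / (Real.exp x - 1) * x ^ σ) < 0 := by
  have hΓ : 0 < Real.Gamma σ := Real.Gamma_pos_of_pos hσ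
  have key : ∀ a ∈ Set.Ioo (0:ℝ) 1,
      HasDerivAt (fun a : ℝ => (hurwitzZeta (a : UnitAddCircle) (σ : ℂ)).re)
        (-(1 / Real.Gamma σ) *
          ∫ x in Set.Ioi (0 : ℝ), Real.exp ((1 - a) * x) / (Real.exp x - 1) * x ^ σ) a ∧
      (-(1 / Real.Gamma σ) *
          ∫ x in Set.Ioi (0 : ℝ), Real.exp ((1 - a) * x) / (Real.exp x - 1) * x ^ σ) < 0 := by
    intro a ha
    have ha0 := ha.1
    have hS : Summable (fun n : ℕ => ((n:ℝ) + a) ^ (-σ - 1)) := summable_shift hσ ha.1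
    have hSpos : 0 < ∑' n : ℕ, ((n:ℝ) + a) ^ (-σ - 1) := by
      apply Summable.tsum_pos hS (fun n => Real.rpow_nonneg (by positivity) _) 0
      simp only [Nat.cast_zero, zero_add]
      exact Real.rpow_pos_of_pos ha.1 _
    have hval : (-(1 / Real.Gamma σ) *
          ∫ x in Set.Ioi (0 : ℝ), Real.exp ((1 - a) * x) / (Real.exp x - 1) * x ^ σ)
        = -σ * ∑' n : ℕ, ((n:ℝ) + a) ^ (-σ - 1) := by
      rw [integral_eval hσ hσ' ha, Real.Gamma_add_one (ne_of_gt hσ)]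
      field_simp
    constructor
    · rw [hval]
      have hd := hasDerivAt_fR hσ hσ' ha
      apply hd.congr_of_eventuallyEq
      filter_upwards [isOpen_Ioo.mem_nhds ha] with y hy
      rw [Fc_eq_of_pos_re hy hσ hσ', Fc_ofReal hy.1 hσ hσ', Complex.ofReal_re]
    · rw [hval]
      exact mul_neg_of_neg_of_pos (by linarith) hSpos
  refine ⟨?_, key⟩
  apply strictAntiOn_of_deriv_neg (convex_Ioo 0 1)
  · intro x hx
    exact ((key x hx).1.continuousAt).continuousWithinAt
  · intro x hx
    rw [interior_Ioo] at hx
    rw [(key x hx).1.deriv]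
    exact (key x hx).2
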